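/- The function φ̃(z) = (2/z²) log(z+√(z²−4)) − log(z+√(z²−4)) + (1 − 2/z²) log 2 + √(z²−4)/(2z), defined on ℂ \ (−∞, 2], satisfies φ̃(2) = 0 and φ̃(z) = −(2/3)(z−2)^{3/2} + O((z−2)²) as z → 2. -/

import Mathlib

open Real Filter Topology Complex Asymptotics

/-- The branch of `√(z²−4)` on `ℂ \ (−∞,2]`, written as `(z−2)^{1/2}(z+2)^{1/2}`
with principal branches. -/
noncomputable def sqrtZsqSub4 (z : ℂ) : ℂ :=
  (z - 2) ^ ((1 : ℂ) / 2) * (z + 2) ^ ((1 : ℂ) / 2)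

/-- `φ̃(z) = (2/z²) log(z+√(z²−4)) − log(z+√(z²−4)) + (1 − 2/z²) log 2 + √(z²−4)/(2z)`,
with principal branches, defined on `ℂ \ (−∞, 2]`. -/
noncomputable def phiTilde (z : ℂ) : ℂ :=
  2 / z ^ 2 * Complex.log (z + sqrtZsqSub4 z) - Complex.log (z + sqrtZsqSub4 z)
    + (1 - 2 / z ^ 2) * (Real.log 2 : ℂ) + sqrtZsqSub4 z / (2 * z)

/-- The slit `(−∞, 2]` on the real axis. -/
def slit : Set ℂ := {z : ℂ | z.im = 0 ∧ z.re ≤ 2}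

noncomputable def vv (z : ℂ) : ℂ := (z + sqrtZsqSub4 z) / 2

lemma sq_half {x : ℂ} (hx : x ≠ 0) : (x ^ ((1:ℂ)/2))^2 = x := by
  rw [sq, ← Complex.cpow_add _ _ hx]
  norm_num

lemma four_pow_half : (4:ℂ) ^ ((1:ℂ)/2) = 2 := by
  rw [show (4:ℂ) = ((4:ℝ):ℂ) by norm_num,
    show ((1:ℂ)/2) = (((1:ℝ)/2 : ℝ) : ℂ) by norm_num,
    ← Complex.ofReal_cpow (by norm_num)]
  rw [show (4:ℝ) = (2:ℝ)^(2:ℕ) by norm_num, ← Real.rpow_natCast 2 2,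
    ← Real.rpow_mul (by norm_num)]
  norm_num

lemma tendsto_zsub : Tendsto (fun z : ℂ => z - 2) (𝓝[slitᶜ] 2) (𝓝 0) := by
  have h : Tendsto (fun z : ℂ => z - 2) (𝓝 2) (𝓝 (2 - 2)) :=
    tendsto_id.sub tendsto_const_nhds
  rw [show (2:ℂ) - 2 = 0 by ring] at h
  exact h.mono_left nhdsWithin_le_nhds

lemma tendsto_t : Tendsto (fun z : ℂ => (z - 2) ^ ((1:ℂ)/2)) (𝓝[slitᶜ] 2) (𝓝 0) := by
  have h := Complex.continuousAt_cpow_zero_of_re_pos (z := (1:ℂ)/2) (by norm_num)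
  have hp : Tendsto (fun z : ℂ => ((z - 2 : ℂ), ((1:ℂ)/2))) (𝓝[slitᶜ] 2) (𝓝 ((0:ℂ), (1:ℂ)/2)) :=
    Tendsto.prodMk_nhds tendsto_zsub tendsto_const_nhds
  have h2 := h.tendsto.comp hp
  simpa only [Function.comp_def, Complex.zero_cpow (show ((1:ℂ)/2) ≠ 0 by norm_num)] using h2

lemma tendsto_p2 : Tendsto (fun z : ℂ => (z + 2) ^ ((1:ℂ)/2)) (𝓝[slitᶜ] 2) (𝓝 2) := by
  have hc : ContinuousAt (· ^ ((1:ℂ)/2)) (4:ℂ) :=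
    continuousAt_cpow_const (by norm_num [Complex.mem_slitPlane_iff])
  have hp : Tendsto (fun z : ℂ => z + 2) (𝓝[slitᶜ] 2) (𝓝 4) := by
    have h : Tendsto (fun z : ℂ => z + 2) (𝓝 2) (𝓝 (2 + 2)) :=
      tendsto_id.add tendsto_const_nhds
    rw [show (2:ℂ) + 2 = 4 by ring] at h
    exact h.mono_left nhdsWithin_le_nhds
  have h2 := hc.tendsto.comp hp
  simpa only [Function.comp_def, four_pow_half] using h2

lemma tendsto_s : Tendsto sqrtZsqSub4 (𝓝[slitᶜ] 2) (𝓝 0) := by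
  have h := tendsto_t.mul tendsto_p2
  rw [zero_mul] at h
  exact h

lemma tendsto_v : Tendsto vv (𝓝[slitᶜ] 2) (𝓝 1) := by
  have hz : Tendsto (fun z : ℂ => z) (𝓝[slitᶜ] 2) (𝓝 2) := tendsto_id.mono_left nhdsWithin_le_nhds
  have h := (hz.add tendsto_s).div_const 2
  rw [show ((2:ℂ) + 0)/2 = 1 by norm_num] at h
  exact h

lemma tendsto_u : Tendsto (fun z => (vv z) ^ ((1:ℂ)/2)) (𝓝[slitᶜ] 2) (𝓝 1) := by
  have hc : ContinuousAt (· ^ ((1:ℂ)/2)) (1:ℂ) :=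
    continuousAt_cpow_const (by simp [Complex.mem_slitPlane_iff])
  have h2 := hc.tendsto.comp tendsto_v
  simpa only [Function.comp_def, Complex.one_cpow] using h2

lemma slit_facts {z : ℂ} (hz : z ∉ slit) : z - 2 ≠ 0 ∧ z + 2 ≠ 0 := by
  constructor <;> intro h <;> apply hz
  · have h2 : z = 2 := by linear_combination h
    subst h2
    constructor <;> norm_num
  · have h2 : z = -2 := by linear_combination h
    subst h2
    constructor <;> norm_num

lemma logTaylor_four (q : ℂ) :
    Complex.logTaylor 4 q = q - q^2/2 + q^3/3 := by
  simp [Complex.logTaylor, Finset.sum_range_succ]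
  ring

lemma main_id {z : ℂ} (hz : z ∉ slit) (hv0 : vv z ≠ 0) (hv1 : (vv z)^2 + 1 ≠ 0)
    (hz0 : z ≠ 0) :
    phiTilde z + 2/3 * (z-2)^((3:ℂ)/2)
      = (vv z - 1)^4 * ((2*(vv z)^3 + 5*(vv z)^2 + 10*(vv z) + 4) / (6*((vv z)^2+1)^2))
        + (2/z^2 - 1) * (Complex.log (vv z) - Complex.logTaylor 4 (vv z - 1))
        + 2/3 * ((z-2) * (z-2)^((1:ℂ)/2) - (vv z - 1)^3) := by
  obtain ⟨h1, h2⟩ := slit_facts hz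
  have hsv : sqrtZsqSub4 z = 2 * vv z - z := by unfold vv; ring
  have hs2 : sqrtZsqSub4 z ^ 2 = (z-2)*(z+2) := by
    unfold sqrtZsqSub4; rw [mul_pow, sq_half h1, sq_half h2]
  have hzv : z * vv z = (vv z)^2 + 1 := by
    rw [hsv] at hs2; linear_combination -hs2/4
  have hlog : Complex.log (z + sqrtZsqSub4 z) = Real.log 2 + Complex.log (vv z) := by
    rw [show z + sqrtZsqSub4 z = ((2:ℝ):ℂ) * vv z by unfold vv; push_cast; ring]
    exact Complex.log_ofReal_mul (by norm_num) hv0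
  have h32 : (z-2)^((3:ℂ)/2) = (z-2) * (z-2)^((1:ℂ)/2) := by
    rw [show ((3:ℂ)/2) = 1 + 1/2 by norm_num, Complex.cpow_add _ _ h1, Complex.cpow_one]
  have hzeq : z = ((vv z)^2 + 1) / vv z := (eq_div_iff hv0).mpr hzv
  unfold phiTilde
  rw [hlog, hsv, logTaylor_four, h32]
  set v := vv z with hv
  set T := (z - 2) ^ ((1:ℂ)/2) with hT2
  clear_value T
  rw [hzeq]
  field_simp [hv0, hv1]
  ring

lemma hzv_lemma {z : ℂ} (hz : z ∉ slit) : z * vv z = (vv z)^2 + 1 := by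
  obtain ⟨h1, h2⟩ := slit_facts hz
  have hsv : sqrtZsqSub4 z = 2 * vv z - z := by unfold vv; ring
  have hs2 : sqrtZsqSub4 z ^ 2 = (z-2)*(z+2) := by
    unfold sqrtZsqSub4; rw [mul_pow, sq_half h1, sq_half h2]
  rw [hsv] at hs2; linear_combination -hs2/4

lemma hq2_lemma {z : ℂ} (hz : z ∉ slit) : (vv z - 1)^2 = (z - 2) * vv z := by
  linear_combination -hzv_lemma hz

noncomputable def rr (z : ℂ) : ℂ :=
  ((z - 2) ^ ((1:ℂ)/2) + (z + 2) ^ ((1:ℂ)/2)) / (2 * (vv z) ^ ((1:ℂ)/2))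

lemma tendsto_rr : Tendsto rr (𝓝[slitᶜ] 2) (𝓝 1) := by
  have h := (tendsto_t.add tendsto_p2).div
    ((tendsto_const_nhds (x := (2:ℂ))).mul tendsto_u) (by norm_num)
  rw [show ((0:ℂ) + 2) / (2 * 1) = 1 by norm_num] at h
  exact h

lemma ev_q_eq : ∀ᶠ z in 𝓝[slitᶜ] 2,
    vv z - 1 = (z - 2) ^ ((1:ℂ)/2) * (vv z) ^ ((1:ℂ)/2) := by
  filter_upwards [eventually_mem_nhdsWithin,
    tendsto_v.eventually_ne (show (1:ℂ) ≠ 0 by norm_num),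
    tendsto_rr.eventually_ne (show (1:ℂ) ≠ -1 by norm_num)] with z hz hv0 hrneg
  obtain ⟨h1, h2⟩ := slit_facts hz
  set t := (z - 2) ^ ((1:ℂ)/2) with ht
  set p := (z + 2) ^ ((1:ℂ)/2) with hp
  set u := (vv z) ^ ((1:ℂ)/2) with hu
  have ht0 : t ≠ 0 := by
    rw [ht, Ne, Complex.cpow_eq_zero_iff]; tauto
  have hu0 : u ≠ 0 := by
    rw [hu, Ne, Complex.cpow_eq_zero_iff]; tauto
  have ht2 : t^2 = z - 2 := sq_half h1
  have hu2 : u^2 = vv z := sq_half hv0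
  have hqr : vv z - 1 = t * u * rr z := by
    have hv : vv z - 1 = (t^2 + t*p)/2 := by
      rw [ht2]; unfold vv sqrtZsqSub4; rw [← ht, ← hp]; ring
    rw [hv]; unfold rr; rw [← ht, ← hp, ← hu]
    field_simp
  have hrr2 : rr z ^ 2 = 1 := by
    have hq2 := hq2_lemma hz
    rw [hqr] at hq2
    have h3 : (z - 2) * vv z * (rr z ^ 2 - 1) = 0 := by
      linear_combination hq2 - rr z ^ 2 * u ^ 2 * ht2 - rr z ^ 2 * (z - 2) * hu2
    rcases mul_eq_zero.mp h3 with h4 | h4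
    · exact absurd (mul_eq_zero.mp h4) (by push_neg; exact ⟨h1, hv0⟩)
    · linear_combination h4
  have : (rr z - 1) * (rr z + 1) = 0 := by linear_combination hrr2
  rcases mul_eq_zero.mp this with h4 | h4
  · rw [hqr, sub_eq_zero.mp h4, mul_one]
  · exact absurd (by linear_combination h4) hrneg

lemma tendsto_z : Tendsto (fun z : ℂ => z) (𝓝[slitᶜ] 2) (𝓝 2) :=
  tendsto_id.mono_left nhdsWithin_le_nhds

lemma part2 : (fun z : ℂ => phiTilde z + 2 / 3 * (z - 2) ^ ((3 : ℂ) / 2))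
      =O[𝓝[slitᶜ] 2] (fun z : ℂ => (z - 2) ^ 2) := by
  set l := 𝓝[slitᶜ] (2:ℂ) with hl
  -- eventual nonvanishing facts
  have hvne : ∀ᶠ z in l, vv z ≠ 0 := tendsto_v.eventually_ne (by norm_num)
  have hv21t : Tendsto (fun z => (vv z)^2 + 1) l (𝓝 2) := by
    have h := (tendsto_v.pow 2).add (tendsto_const_nhds (x := (1:ℂ)))
    rw [show ((1:ℂ)^2 + 1) = 2 by norm_num] at h
    exact h
  have hv21 : ∀ᶠ z in l, (vv z)^2 + 1 ≠ 0 := hv21t.eventually_ne (by norm_num)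
  have hzne : ∀ᶠ z in l, z ≠ 0 := tendsto_z.eventually_ne (by norm_num)
  -- ‖q‖² ≤ 2‖z-2‖ and ‖q‖ ≤ 1/2
  have hvbd : ∀ᶠ z in l, ‖vv z‖ ≤ 2 := by
    filter_upwards [tendsto_v.norm.eventually_lt_const (by norm_num : ‖(1:ℂ)‖ < 2)] with z h
    exact h.le
  have hqsq : ∀ᶠ z in l, ‖vv z - 1‖^2 ≤ 2 * ‖z - 2‖ := by
    filter_upwards [hvbd, eventually_mem_nhdsWithin] with z hv hz
    have h := hq2_lemma hz
    calc ‖vv z - 1‖^2 = ‖(vv z - 1)^2‖ := (norm_pow _ 2).symm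
      _ = ‖z - 2‖ * ‖vv z‖ := by rw [h, norm_mul]
      _ ≤ ‖z - 2‖ * 2 := by gcongr
      _ = 2 * ‖z - 2‖ := by ring
  have hqsmall : ∀ᶠ z in l, ‖vv z - 1‖ ≤ 1/2 := by
    have ht : Tendsto (fun z => vv z - 1) l (𝓝 0) := by
      have := tendsto_v.sub (tendsto_const_nhds (x := (1:ℂ)))
      rwa [sub_self] at this
    filter_upwards [ht.norm.eventually_lt_const (by norm_num : ‖(0:ℂ)‖ < 1/2)] with z h
    exact h.le
  -- piece A
  have hA : (fun z : ℂ => (vv z - 1)^4 *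
      ((2*(vv z)^3 + 5*(vv z)^2 + 10*(vv z) + 4) / (6*((vv z)^2+1)^2)))
      =O[l] (fun z : ℂ => (z - 2) ^ 2) := by
    have hca : ContinuousAt (fun v : ℂ => (2*v^3 + 5*v^2 + 10*v + 4) / (6*(v^2+1)^2)) 1 := by
      apply ContinuousAt.div (by fun_prop) (by fun_prop)
      norm_num
    have hg := hca.tendsto.comp tendsto_v
    have hgbd : ∀ᶠ z in l, ‖(2*(vv z)^3 + 5*(vv z)^2 + 10*(vv z) + 4) / (6*((vv z)^2+1)^2)‖ ≤ 1 := by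
      have h1 : ‖(2*(1:ℂ)^3 + 5*1^2 + 10*1 + 4) / (6*((1:ℂ)^2+1)^2)‖ < 1 := by
        norm_num
      filter_upwards [hg.norm.eventually_lt_const h1] with z h
      exact h.le
    rw [Asymptotics.isBigO_iff]
    refine ⟨4, ?_⟩
    filter_upwards [hgbd, hqsq] with z hgz hqz
    rw [norm_mul, norm_pow, norm_pow]
    have h3 : ‖vv z - 1‖^4 * ‖(2 * vv z ^ 3 + 5 * vv z ^ 2 + 10 * vv z + 4) /
        (6 * (vv z ^ 2 + 1) ^ 2)‖ ≤ ‖vv z - 1‖^4 :=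
      mul_le_of_le_one_right (by positivity) hgz
    have h4 : (‖vv z - 1‖^2)^2 ≤ (2*‖z-2‖)^2 := by
      gcongr
    nlinarith [norm_nonneg (z-2)]
  -- piece B
  have hB : (fun z : ℂ => (2/z^2 - 1) *
      (Complex.log (vv z) - Complex.logTaylor 4 (vv z - 1)))
      =O[l] (fun z : ℂ => (z - 2) ^ 2) := by
    have hcoef : Tendsto (fun z : ℂ => 2/z^2 - 1) l (𝓝 (2/2^2 - 1)) :=
      ((tendsto_const_nhds (x := (2:ℂ))).div (tendsto_z.pow 2) (by norm_num)).sub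
        tendsto_const_nhds
    have hcbd : ∀ᶠ z in l, ‖2/z^2 - 1‖ ≤ 1 := by
      have h1 : ‖(2:ℂ)/2^2 - 1‖ < 1 := by norm_num
      filter_upwards [hcoef.norm.eventually_lt_const h1] with z h
      exact h.le
    rw [Asymptotics.isBigO_iff]
    refine ⟨2, ?_⟩
    filter_upwards [hcbd, hqsmall, hqsq] with z hc hq hqs
    have hlog : ‖Complex.log (vv z) - Complex.logTaylor 4 (vv z - 1)‖
        ≤ ‖vv z - 1‖^4 * (1 - ‖vv z - 1‖)⁻¹ / 4 := by
      have := Complex.norm_log_sub_logTaylor_le 3 (z := vv z - 1)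
        (by linarith [hq] : ‖vv z - 1‖ < 1)
      rw [show (1:ℂ) + (vv z - 1) = vv z by ring] at this
      exact_mod_cast this
    have hinv : (1 - ‖vv z - 1‖)⁻¹ ≤ 2 := by
      rw [inv_le_comm₀ (by linarith) (by norm_num)]
      linarith
    calc ‖(2/z^2 - 1) * (Complex.log (vv z) - Complex.logTaylor 4 (vv z - 1))‖
        = ‖2/z^2 - 1‖ * ‖Complex.log (vv z) - Complex.logTaylor 4 (vv z - 1)‖ := norm_mul _ _
      _ ≤ 1 * (‖vv z - 1‖^4 * (1 - ‖vv z - 1‖)⁻¹ / 4) := by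
          gcongr
      _ ≤ 1 * (‖vv z - 1‖^4 * 2 / 4) := by
          have h8 : (0:ℝ) ≤ ‖vv z - 1‖^4 := by positivity
          have := mul_le_mul_of_nonneg_left hinv h8
          linarith
      _ = (‖vv z - 1‖^2)^2 / 2 := by ring
      _ ≤ (2*‖z-2‖)^2 / 2 := by gcongr
      _ ≤ 2 * ‖(z-2)^2‖ := by rw [norm_pow]; nlinarith [norm_nonneg (z-2)]
  -- piece C
  have hC : (fun z : ℂ => 2/3 * ((z-2) * (z-2)^((1:ℂ)/2) - (vv z - 1)^3))
      =O[l] (fun z : ℂ => (z - 2) ^ 2) := by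
    have hu1t : Tendsto (fun z => (vv z)^((1:ℂ)/2) + 1) l (𝓝 2) := by
      have h := tendsto_u.add (tendsto_const_nhds (x := (1:ℂ)))
      rw [show ((1:ℂ) + 1) = 2 by norm_num] at h
      exact h
    have hu1 : ∀ᶠ z in l, 1 ≤ ‖(vv z)^((1:ℂ)/2) + 1‖ := by
      filter_upwards [hu1t.norm.eventually_const_lt (by norm_num : (1:ℝ) < ‖(2:ℂ)‖)] with z h
      exact h.le
    have hu3t : Tendsto (fun z => ((vv z)^((1:ℂ)/2))^2 + (vv z)^((1:ℂ)/2) + 1) l (𝓝 3) := by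
      have h := ((tendsto_u.pow 2).add tendsto_u).add (tendsto_const_nhds (x := (1:ℂ)))
      rw [show ((1:ℂ)^2 + 1 + 1) = 3 by norm_num] at h
      exact h
    have hu3 : ∀ᶠ z in l, ‖((vv z)^((1:ℂ)/2))^2 + (vv z)^((1:ℂ)/2) + 1‖ ≤ 4 := by
      filter_upwards [hu3t.norm.eventually_lt_const (by norm_num : ‖(3:ℂ)‖ < 4)] with z h
      exact h.le
    have hubd : ∀ᶠ z in l, ‖(vv z)^((1:ℂ)/2)‖ ≤ 2 := by
      filter_upwards [tendsto_u.norm.eventually_lt_const (by norm_num : ‖(1:ℂ)‖ < 2)] with z h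
      exact h.le
    rw [Asymptotics.isBigO_iff]
    refine ⟨8, ?_⟩
    filter_upwards [ev_q_eq, hu1, hu3, hubd, hvne, eventually_mem_nhdsWithin]
      with z hqe hu1z hu3z hub hv0 hz
    obtain ⟨h1, h2⟩ := slit_facts hz
    set t := (z - 2) ^ ((1:ℂ)/2) with ht
    set u := (vv z) ^ ((1:ℂ)/2) with hu
    have ht2 : t^2 = z - 2 := sq_half h1
    have hu2 : u^2 = vv z := sq_half hv0
    have hrel : u^2 - 1 = t * u := by linear_combination hu2 + hqe
    have h5 : ((z-2)*t - (vv z - 1)^3) * (u+1) = -((z-2)*t*(vv z - 1)*(u^2+u+1)) := by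
      rw [hqe, ← ht2]
      linear_combination (-(t^3*(u^2+u+1))) * hrel
    have hnorm5 : ‖(z-2)*t - (vv z - 1)^3‖ ≤ ‖z-2‖ * ‖t‖ * ‖vv z - 1‖ * ‖u^2+u+1‖ := by
      have e1 : ‖(z-2)*t - (vv z - 1)^3‖ * ‖u+1‖ = ‖(z-2)*t*(vv z - 1)*(u^2+u+1)‖ := by
        rw [← norm_mul, h5, norm_neg]
      calc ‖(z-2)*t - (vv z - 1)^3‖ = ‖(z-2)*t - (vv z - 1)^3‖ * 1 := by ring
        _ ≤ ‖(z-2)*t - (vv z - 1)^3‖ * ‖u+1‖ := by gcongr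
        _ = ‖(z-2)*t*(vv z - 1)*(u^2+u+1)‖ := e1
        _ = ‖z-2‖ * ‖t‖ * ‖vv z - 1‖ * ‖u^2+u+1‖ := by
            rw [norm_mul, norm_mul, norm_mul]
    have hqt : ‖vv z - 1‖ ≤ 2 * ‖t‖ := by
      rw [hqe, norm_mul]
      calc ‖t‖ * ‖u‖ ≤ ‖t‖ * 2 := by gcongr
        _ = 2 * ‖t‖ := by ring
    have htsq : ‖t‖^2 = ‖z - 2‖ := by rw [← norm_pow, ht2]
    calc ‖2/3 * ((z-2) * t - (vv z - 1)^3)‖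
        = ‖(2:ℂ)/3‖ * ‖(z-2)*t - (vv z - 1)^3‖ := norm_mul _ _
      _ ≤ 1 * (‖z-2‖ * ‖t‖ * ‖vv z - 1‖ * ‖u^2+u+1‖) := by
          gcongr
          norm_num [norm_div]
      _ ≤ 1 * (‖z-2‖ * ‖t‖ * (2*‖t‖) * 4) := by gcongr
      _ = 8 * ‖z-2‖ * ‖t‖^2 := by ring
      _ = 8 * ‖z-2‖ * ‖z-2‖ := by rw [htsq]
      _ = 8 * ‖(z-2)^2‖ := by rw [norm_pow]; ring
  -- combine
  have heq : (fun z : ℂ => phiTilde z + 2 / 3 * (z - 2) ^ ((3 : ℂ) / 2)) =ᶠ[l]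
      (fun z : ℂ => (vv z - 1)^4 * ((2*(vv z)^3 + 5*(vv z)^2 + 10*(vv z) + 4) / (6*((vv z)^2+1)^2))
        + (2/z^2 - 1) * (Complex.log (vv z) - Complex.logTaylor 4 (vv z - 1))
        + 2/3 * ((z-2) * (z-2)^((1:ℂ)/2) - (vv z - 1)^3)) := by
    filter_upwards [eventually_mem_nhdsWithin, hvne, hv21, hzne] with z hz hv0 hv1 hz0
    exact main_id hz hv0 hv1 hz0
  exact ((hA.add hB).add hC).congr' heq.symm EventuallyEq.rfl


lemma phiTilde_two : phiTilde 2 = 0 := by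
  have hs : sqrtZsqSub4 2 = 0 := by
    simp [sqrtZsqSub4, show (2:ℂ) - 2 = 0 by ring,
      Complex.zero_cpow (show ((1:ℂ)/2) ≠ 0 by norm_num)]
  have hl : Complex.log 2 = (Real.log 2 : ℂ) := by
    rw [show (2:ℂ) = ((2:ℝ):ℂ) by norm_num, ← Complex.ofReal_log (by norm_num)]
  unfold phiTilde
  rw [hs, show (2:ℂ)+0 = 2 by ring, hl]
  ring

/-- `φ̃(2) = 0` and `φ̃(z) = −(2/3)(z−2)^{3/2} + O((z−2)²)` as `z → 2` in `ℂ \ (−∞, 2]`. -/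
theorem phiTilde_at_two :
    phiTilde 2 = 0 ∧
    (fun z : ℂ => phiTilde z + 2 / 3 * (z - 2) ^ ((3 : ℂ) / 2))
      =O[𝓝[slitᶜ] 2] (fun z : ℂ => (z - 2) ^ 2) :=
  ⟨phiTilde_two, part2⟩
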